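/- Let A and B be unital simple algebras over a field F. Then the F-algebra A ⊗ B is simple (its only two-sided ideals are {0} and A ⊗ B) if and only if Z(A) ⊗ Z(B) is a field, where Z(A) and Z(B) denote the centers of A and B. -/

import Mathlib

set_option synthInstance.maxHeartbeats 400000
set_option maxHeartbeats 1000000

open TensorProduct

section coord
variable {F A B ι : Type*} [DecidableEq ι] [Field F] [Ring A] [Algebra F A] [Ring B] [Algebra F B]

noncomputable def coordMap (β : Module.Basis ι F B) : A ⊗[F] B ≃ₗ[F] (ι →₀ A) :=
  (TensorProduct.congr (LinearEquiv.refl F A) β.repr).trans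
    (TensorProduct.finsuppScalarRight F F A ι)

variable (β : Module.Basis ι F B)

lemma coordMap_tmul (a : A) (b : B) (i : ι) :
    coordMap β (a ⊗ₜ[F] b) i = β.repr b i • a := by
  simp [coordMap]

lemma coordMap_mul_left (a : A) (x : A ⊗[F] B) (i : ι) :
    coordMap β ((a ⊗ₜ[F] (1 : B)) * x) i = a * coordMap β x i := by
  induction x using TensorProduct.induction_on with
  | zero => simp
  | tmul a' b =>
      rw [Algebra.TensorProduct.tmul_mul_tmul, one_mul, coordMap_tmul, coordMap_tmul,
        mul_smul_comm]
  | add x y hx hy => rw [mul_add, map_add, map_add]; simp [Finsupp.add_apply, hx, hy, mul_add, add_mul]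

lemma coordMap_mul_right (a : A) (x : A ⊗[F] B) (i : ι) :
    coordMap β (x * (a ⊗ₜ[F] (1 : B))) i = coordMap β x i * a := by
  induction x using TensorProduct.induction_on with
  | zero => simp
  | tmul a' b =>
      rw [Algebra.TensorProduct.tmul_mul_tmul, mul_one, coordMap_tmul, coordMap_tmul,
        smul_mul_assoc]
  | add x y hx hy => rw [add_mul, map_add, map_add]; simp [Finsupp.add_apply, hx, hy, mul_add, add_mul]

lemma coordMap_sum_repr (x : A ⊗[F] B) :
    ∑ i ∈ (coordMap β x).support, (coordMap β x i) ⊗ₜ[F] (β i : B) = x := by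
  apply (coordMap β).injective
  ext j
  rw [map_sum, Finset.sum_apply']
  have : ∀ i ∈ (coordMap β x).support,
      coordMap β ((coordMap β x i) ⊗ₜ[F] (β i : B)) j
        = if i = j then coordMap β x i else 0 := by
    intro i _
    rw [coordMap_tmul, Module.Basis.repr_self, Finsupp.single_apply]
    split <;> simp
  rw [Finset.sum_congr rfl this, Finset.sum_ite_eq' _ j]
  split
  · rfl
  · exact (Finsupp.notMem_support_iff.mp (by assumption)).symm

end coord
section core
variable {F A B ι : Type*} [DecidableEq ι] [Field F] [Ring A] [Algebra F A]
  [Ring B] [Algebra F B] [Nontrivial A]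

open Classical in
lemma core_lemma (β : Module.Basis ι F B)
    (hA : ∀ I : TwoSidedIdeal A, I = ⊥ ∨ I = ⊤)
    (J : TwoSidedIdeal (A ⊗[F] B)) {x₀ : A ⊗[F] B} (hx₀J : x₀ ∈ J) (hx₀ : x₀ ≠ 0) :
    ∃ x ∈ J, x ≠ 0 ∧ ∀ i, coordMap β x i ∈ Subring.center A := by
  have hex : ∃ n : ℕ, ∃ x, x ∈ J ∧ x ≠ 0 ∧ ((coordMap β x).support.card = n) :=
    ⟨_, x₀, hx₀J, hx₀, rfl⟩
  set n := Nat.find hex with hn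
  obtain ⟨x, hxJ, hx0, hcard⟩ := Nat.find_spec hex
  have hmin : ∀ y, y ∈ J → y ≠ 0 → n ≤ (coordMap β y).support.card := fun y h1 h2 =>
    Nat.find_min' hex ⟨y, h1, h2, rfl⟩
  have hcx : coordMap β x ≠ 0 := fun h => hx0 (by
    simpa using congrArg (coordMap β).symm h)
  obtain ⟨i₁, hi₁⟩ := Finsupp.support_nonempty_iff.mpr hcx
  -- the two-sided ideal of coefficients at i₁
  let I : TwoSidedIdeal A := TwoSidedIdeal.mk'
    {a | ∃ y, y ∈ J ∧ (coordMap β y).support ⊆ (coordMap β x).support ∧ coordMap β y i₁ = a}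
    ⟨0, J.zero_mem, by simp⟩
    (by rintro _ _ ⟨y, hy, hs, rfl⟩ ⟨y', hy', hs', rfl⟩
        refine ⟨y + y', J.add_mem hy hy', ?_, by rw [map_add]; simp⟩
        rw [map_add]
        exact Finsupp.support_add.trans (Finset.union_subset hs hs'))
    (by rintro _ ⟨y, hy, hs, rfl⟩
        exact ⟨-y, J.neg_mem hy, by simp [hs], by simp⟩)
    (by rintro a _ ⟨y, hy, hs, rfl⟩
        refine ⟨(a ⊗ₜ[F] (1 : B)) * y, J.mul_mem_left _ _ hy, ?_, coordMap_mul_left β a y i₁⟩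
        intro j hj
        apply hs
        rw [Finsupp.mem_support_iff] at hj ⊢
        intro h0
        exact hj (by rw [coordMap_mul_left, h0, mul_zero]))
    (by rintro _ b ⟨y, hy, hs, rfl⟩
        refine ⟨y * (b ⊗ₜ[F] (1 : B)), J.mul_mem_right _ _ hy, ?_, coordMap_mul_right β b y i₁⟩
        intro j hj
        apply hs
        rw [Finsupp.mem_support_iff] at hj ⊢
        intro h0
        exact hj (by rw [coordMap_mul_right, h0, zero_mul]))
  have hIne : I ≠ ⊥ := by
    intro h
    have : coordMap β x i₁ ∈ I := by
      rw [TwoSidedIdeal.mem_mk']; exact ⟨x, hxJ, le_refl _, rfl⟩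
    rw [h, TwoSidedIdeal.mem_bot] at this
    exact Finsupp.mem_support_iff.mp hi₁ this
  obtain ⟨x', hx'J, hx'sub, hx'one⟩ : ∃ y, y ∈ J ∧
      (coordMap β y).support ⊆ (coordMap β x).support ∧ coordMap β y i₁ = 1 := by
    have : (1 : A) ∈ I := by rw [(hA I).resolve_left hIne]; exact TwoSidedIdeal.mem_top _
    rwa [TwoSidedIdeal.mem_mk'] at this
  have hx'0 : x' ≠ 0 := by
    intro h
    rw [h] at hx'one
    simp at hx'one
  refine ⟨x', hx'J, hx'0, fun i => Subring.mem_center_iff.mpr fun a => ?_⟩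
  -- commutator
  set d := (a ⊗ₜ[F] (1 : B)) * x' - x' * (a ⊗ₜ[F] (1 : B)) with hd
  have hdc : ∀ j, coordMap β d j = a * coordMap β x' j - coordMap β x' j * a := by
    intro j
    rw [hd, map_sub, Finsupp.sub_apply, coordMap_mul_left, coordMap_mul_right]
  have hd0 : d = 0 := by
    by_contra hdn
    have hdJ : d ∈ J := J.sub_mem (J.mul_mem_left _ _ hx'J) (J.mul_mem_right _ _ hx'J)
    have hsub : (coordMap β d).support ⊆ (coordMap β x).support.erase i₁ := by
      intro j hj
      rw [Finsupp.mem_support_iff] at hj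
      rw [Finset.mem_erase]
      constructor
      · rintro rfl
        exact hj (by rw [hdc, hx'one, mul_one, one_mul, sub_self])
      · refine hx'sub ?_
        rw [Finsupp.mem_support_iff]
        intro h0
        exact hj (by rw [hdc, h0, mul_zero, zero_mul, sub_self])
    have hlt : (coordMap β d).support.card < n := by
      calc (coordMap β d).support.card ≤ ((coordMap β x).support.erase i₁).card :=
            Finset.card_le_card hsub
        _ < (coordMap β x).support.card := Finset.card_erase_lt_of_mem hi₁
        _ = n := hcard
    exact absurd (hmin d hdJ hdn) (not_le.mpr hlt)
  have := hdc i
  rw [hd0] at this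
  simp only [map_zero, Finsupp.coe_zero, Pi.zero_apply] at this
  exact sub_eq_zero.mp this.symm
end core
section maps
variable {F A B : Type*} [Field F] [Ring A] [Algebra F A] [Ring B] [Algebra F B]

lemma mapRight_injective {K : Type*} [Ring K] [Algebra F K] (f : K →ₐ[F] A)
    (hf : Function.Injective f) :
    Function.Injective (Algebra.TensorProduct.map f (AlgHom.id F B)) := by
  have h : ⇑(Algebra.TensorProduct.map f (AlgHom.id F B))
      = ⇑(LinearMap.rTensor B f.toLinearMap) := by
    funext x
    induction x using TensorProduct.induction_on with
    | zero => simp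
    | tmul k b => simp
    | add x y hx hy => simp [map_add, hx, hy]
  rw [h]
  exact Module.Flat.rTensor_preserves_injective_linearMap _ hf

lemma mapLeft_injective {L : Type*} [Ring L] [Algebra F L] (g : L →ₐ[F] B)
    (hg : Function.Injective g) :
    Function.Injective (Algebra.TensorProduct.map (AlgHom.id F A) g) := by
  have h : ⇑(Algebra.TensorProduct.map (AlgHom.id F A) g)
      = ⇑(LinearMap.lTensor A g.toLinearMap) := by
    funext x
    induction x using TensorProduct.induction_on with
    | zero => simp
    | tmul k b => simp
    | add x y hx hy => simp [map_add, hx, hy]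
  rw [h]
  exact Module.Flat.lTensor_preserves_injective_linearMap _ hg

open TensorProduct in
lemma repr_of_coords_center {ι : Type*} [DecidableEq ι] (β : Module.Basis ι F B)
    (x : A ⊗[F] B) (hx : ∀ i, coordMap β x i ∈ Subring.center A) :
    ∃ y : (Subalgebra.center F A) ⊗[F] B,
      Algebra.TensorProduct.map (Subalgebra.center F A).val (AlgHom.id F B) y = x := by
  refine ⟨∑ i ∈ (coordMap β x).support,
    (⟨coordMap β x i, Subalgebra.mem_center_iff.mpr fun b =>
      (Subring.mem_center_iff.mp (hx i) b)⟩ : Subalgebra.center F A) ⊗ₜ[F] (β i), ?_⟩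
  rw [map_sum]
  simp only [Algebra.TensorProduct.map_tmul, Subalgebra.coe_val, AlgHom.coe_id, id_eq]
  exact coordMap_sum_repr β x

end maps
set_option maxHeartbeats 1000000 in
open TensorProduct in
lemma simple_of_isField {F A B : Type*} [Field F] [Ring A] [Algebra F A] [Ring B] [Algebra F B]
    [Nontrivial A] [Nontrivial B]
    (hA : ∀ I : TwoSidedIdeal A, I = ⊥ ∨ I = ⊤)
    (hB : ∀ I : TwoSidedIdeal B, I = ⊥ ∨ I = ⊤)
    (hfield : IsField ((Subalgebra.center F A) ⊗[F] (Subalgebra.center F B))) :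
    ∀ J : TwoSidedIdeal (A ⊗[F] B), J = ⊥ ∨ J = ⊤ := by
  classical
  intro J
  rcases eq_or_ne J ⊥ with h | h
  · exact Or.inl h
  right
  obtain ⟨x₀, hx₀J, hx₀⟩ : ∃ x ∈ J, x ≠ 0 := by
    by_contra hc
    push_neg at hc
    refine h (le_antisymm (fun x hx => ?_) bot_le)
    rw [TwoSidedIdeal.mem_bot]
    exact hc x hx
  set K := Subalgebra.center F A with hK
  set L := Subalgebra.center F B with hL
  let β := Module.Basis.ofVectorSpace F B
  obtain ⟨x, hxJ, hx0, hxc⟩ := core_lemma β hA J hx₀J hx₀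
  let φ₁ : K ⊗[F] B →ₐ[F] A ⊗[F] B := Algebra.TensorProduct.map K.val (AlgHom.id F B)
  obtain ⟨y, hy⟩ := repr_of_coords_center β x hxc
  let J₁ := J.comap φ₁
  have hyJ₁ : y ∈ J₁ := by rw [TwoSidedIdeal.mem_comap]; rw [show ⇑φ₁ = _ from rfl, hy]; exact hxJ
  have hy0 : y ≠ 0 := fun h0 => hx0 (by rw [← hy, h0, map_zero])
  let c := Algebra.TensorProduct.comm F K B
  let J₂ := J₁.comap (c.symm : (B ⊗[F] K) ≃ₐ[F] (K ⊗[F] B))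
  have hzJ₂ : c y ∈ J₂ := by
    rw [TwoSidedIdeal.mem_comap]
    simpa using hyJ₁
  have hz0 : c y ≠ 0 := fun h0 => hy0 (by simpa using congrArg c.symm h0)
  let κ := Module.Basis.ofVectorSpace F K
  obtain ⟨w, hwJ₂, hw0, hwc⟩ := core_lemma κ hB J₂ hzJ₂ hz0
  let φ₂ : L ⊗[F] K →ₐ[F] B ⊗[F] K := Algebra.TensorProduct.map L.val (AlgHom.id F K)
  obtain ⟨v, hv⟩ := repr_of_coords_center κ w hwc
  let J₃ := J₂.comap φ₂
  have hvJ₃ : v ∈ J₃ := by rw [TwoSidedIdeal.mem_comap, show ⇑φ₂ = _ from rfl, hv]; exact hwJ₂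
  have hv0 : v ≠ 0 := fun h0 => hw0 (by rw [← hv, h0, map_zero])
  have hLK : IsField (L ⊗[F] K) :=
    (Algebra.TensorProduct.comm F L K).toRingEquiv.toMulEquiv.isField hfield
  obtain ⟨v', hv'⟩ := hLK.mul_inv_cancel hv0
  have h1 : (1 : L ⊗[F] K) ∈ J₃ := hv' ▸ J₃.mul_mem_right _ _ hvJ₃
  rw [TwoSidedIdeal.mem_comap] at h1
  rw [map_one] at h1
  rw [TwoSidedIdeal.mem_comap] at h1
  rw [map_one] at h1
  rw [TwoSidedIdeal.mem_comap] at h1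
  rw [map_one] at h1
  exact TwoSidedIdeal.eq_top _ h1
section forward
variable {F A B : Type*} [Field F] [Ring A] [Algebra F A] [Ring B] [Algebra F B]

open TensorProduct

lemma psi_mem_center (y : (Subalgebra.center F A) ⊗[F] (Subalgebra.center F B)) :
    (Algebra.TensorProduct.map (Subalgebra.center F A).val (Subalgebra.center F B).val) y
      ∈ Subring.center (A ⊗[F] B) := by
  induction y using TensorProduct.induction_on with
  | zero => rw [map_zero]; exact Subring.zero_mem _
  | tmul k l =>
      rw [Algebra.TensorProduct.map_tmul, Subring.mem_center_iff]
      simp only [Subalgebra.coe_val]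
      intro g
      induction g using TensorProduct.induction_on with
      | zero => rw [zero_mul, mul_zero]
      | tmul a b =>
          rw [Algebra.TensorProduct.tmul_mul_tmul, Algebra.TensorProduct.tmul_mul_tmul,
            Subalgebra.mem_center_iff.mp k.2 a, Subalgebra.mem_center_iff.mp l.2 b]
      | add g₁ g₂ h₁ h₂ => rw [add_mul, mul_add, h₁, h₂]
  | add y₁ y₂ h₁ h₂ => rw [map_add]; exact Subring.add_mem _ h₁ h₂

lemma coords_center_of_central {ι : Type*} [DecidableEq ι] (β : Module.Basis ι F B) {x : A ⊗[F] B}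
    (hx : x ∈ Subring.center (A ⊗[F] B)) (i : ι) : coordMap β x i ∈ Subring.center A := by
  rw [Subring.mem_center_iff]
  intro a
  have h := Subring.mem_center_iff.mp hx ((a : A) ⊗ₜ[F] (1 : B))
  have h2 := congrArg (fun z => coordMap β z i) h
  simpa [coordMap_mul_left, coordMap_mul_right] using h2

set_option maxHeartbeats 1000000 in
lemma central_repr (x : A ⊗[F] B) (hx : x ∈ Subring.center (A ⊗[F] B)) :
    ∃ y : (Subalgebra.center F A) ⊗[F] (Subalgebra.center F B),
      (Algebra.TensorProduct.map (Subalgebra.center F A).val (Subalgebra.center F B).val) y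
        = x := by
  classical
  set K := Subalgebra.center F A with hKdef
  set L := Subalgebra.center F B with hLdef
  let β := Module.Basis.ofVectorSpace F B
  obtain ⟨y₁, hy₁⟩ := repr_of_coords_center β x (fun i => coords_center_of_central β hx i)
  let φ₁ : K ⊗[F] B →ₐ[F] A ⊗[F] B := Algebra.TensorProduct.map K.val (AlgHom.id F B)
  let z := Algebra.TensorProduct.comm F K B y₁
  let χ : B ⊗[F] K →ₐ[F] A ⊗[F] B :=
    φ₁.comp (Algebra.TensorProduct.comm F K B).symm.toAlgHom
  have hχ : ∀ t : B ⊗[F] K, χ t = φ₁ ((Algebra.TensorProduct.comm F K B).symm t) := fun _ => rfl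
  have hχz : χ z = x := by
    rw [hχ]
    show φ₁ ((Algebra.TensorProduct.comm F K B).symm ((Algebra.TensorProduct.comm F K B) y₁)) = x
    rw [AlgEquiv.symm_apply_apply]
    exact hy₁
  have hχinj : Function.Injective χ := by
    have h1 : Function.Injective φ₁ := mapRight_injective K.val Subtype.val_injective
    exact h1.comp (Algebra.TensorProduct.comm F K B).symm.injective
  have hzc : ∀ b : B, (b ⊗ₜ[F] (1 : K)) * z = z * (b ⊗ₜ[F] (1 : K)) := by
    intro b
    apply hχinj
    rw [map_mul, map_mul, hχz]
    exact Subring.mem_center_iff.mp hx _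
  let κ := Module.Basis.ofVectorSpace F K
  have hcoords : ∀ j, coordMap κ z j ∈ Subring.center B := by
    intro j
    rw [Subring.mem_center_iff]
    intro b
    have h2 := congrArg (fun t => coordMap κ t j) (hzc b)
    simpa [coordMap_mul_left, coordMap_mul_right] using h2
  refine ⟨∑ j ∈ (coordMap κ z).support, (κ j : K) ⊗ₜ[F]
    (⟨coordMap κ z j, Subalgebra.mem_center_iff.mpr fun b =>
      Subring.mem_center_iff.mp (hcoords j) b⟩ : L), ?_⟩
  have hrepr := coordMap_sum_repr κ z
  rw [map_sum]
  refine (Finset.sum_congr rfl fun j _ => ?_).trans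
    (((map_sum χ (fun j => (coordMap κ z j) ⊗ₜ[F] (κ j : K)) _).symm).trans ?_)
  · rw [Algebra.TensorProduct.map_tmul, hχ, Algebra.TensorProduct.comm_symm_tmul,
      Algebra.TensorProduct.map_tmul]
    rfl
  · rw [hrepr]
    exact hχz

lemma nontrivial_tensor [Nontrivial A] [Nontrivial B] : Nontrivial (A ⊗[F] B) := by
  classical
  let β := Module.Basis.ofVectorSpace F B
  haveI : Nonempty (Module.Basis.ofVectorSpaceIndex F B) := β.index_nonempty
  exact Equiv.nontrivial (coordMap β (A := A)).toEquiv

end forward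
/-- Let `A` and `B` be unital simple algebras over a field `F`. Then `A ⊗[F] B` is
simple if and only if `Z(A) ⊗[F] Z(B)` is a field. -/
theorem tensor_product_of_simple_algebras_simple_iff_center_tensor_isField
    (F A B : Type*) [Field F] [Ring A] [Algebra F A] [Ring B] [Algebra F B]
    [Nontrivial A] [Nontrivial B]
    (hAsimple : ∀ I : TwoSidedIdeal A, I = ⊥ ∨ I = ⊤)
    (hBsimple : ∀ I : TwoSidedIdeal B, I = ⊥ ∨ I = ⊤) :
    (∀ J : TwoSidedIdeal (A ⊗[F] B), J = ⊥ ∨ J = ⊤) ↔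
      IsField ((Subalgebra.center F A) ⊗[F] (Subalgebra.center F B)) := by
  constructor
  · intro h
    haveI : Nontrivial (A ⊗[F] B) := nontrivial_tensor
    haveI : IsSimpleRing (A ⊗[F] B) := .of_eq_bot_or_eq_top h
    set ψ := Algebra.TensorProduct.map (Subalgebra.center F A).val
      (Subalgebra.center F B).val with hψ
    have hinj : Function.Injective ψ := by
      have h1 : ψ = (Algebra.TensorProduct.map (AlgHom.id F A)
          (Subalgebra.center F B).val).comp
          (Algebra.TensorProduct.map (Subalgebra.center F A).val
            (AlgHom.id F (Subalgebra.center F B))) := by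
        rw [← Algebra.TensorProduct.map_comp, AlgHom.id_comp, AlgHom.comp_id]
      rw [h1, AlgHom.coe_comp]
      exact (mapLeft_injective _ Subtype.val_injective).comp
        (mapRight_injective _ Subtype.val_injective)
    let ψ' := ψ.toRingHom.codRestrict (Subring.center (A ⊗[F] B)) psi_mem_center
    have hbij : Function.Bijective ψ' := by
      constructor
      · intro a b hab
        exact hinj (congrArg Subtype.val hab)
      · rintro ⟨z, hz⟩
        obtain ⟨y, hy⟩ := central_repr z hz
        exact ⟨y, Subtype.ext hy⟩
    exact (RingEquiv.ofBijective ψ' hbij).toMulEquiv.isField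
      (IsSimpleRing.isField_center _)
  · exact simple_of_isField hAsimple hBsimple
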